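/- There exist subsets A, B of the real line ℝ (with its standard metric) whose coarse intersection does not exist: there is no subset C ⊆ ℝ and no r₀ ≥ 0 such that for every r ≥ r₀ the Hausdorff distance between C and N_r(A) ∩ N_r(B) is finite. (For example, one may take A = {2ⁿ : n = 1, 2, 3, …}, choose a partition A = A₁ ∪ A₂ ∪ ⋯ into infinitely many infinite sets, and take B = ⋃ᵢ {a + 2i : a ∈ Aᵢ}.) -/

import Mathlib

/-- The closed `r`-neighborhood of a subset of `ℝ`. -/
def nbhd (r : ℝ) (Y : Set ℝ) : Set ℝ := {x : ℝ | ∃ y ∈ Y, dist x y ≤ r}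

namespace CoarseCounterexample

/-- Exponent: an injective pairing with good lower bounds. -/
def e (i k : ℕ) : ℕ := Nat.pair (i + 2) k

/-- The points of the set `A`. -/
noncomputable def a (i k : ℕ) : ℝ := 2 ^ e i k

lemma a_pos (i k : ℕ) : 0 < a i k := by unfold a; positivity

lemma e_inj {i k i' k' : ℕ} (h : e i k = e i' k') : i = i' ∧ k = k' := by
  have h2 := Nat.pair_eq_pair.mp h
  omega

lemma le_a {i k n : ℕ} (h : n ≤ e i k) : (2 : ℝ) ^ n ≤ a i k :=
  pow_le_pow_right₀ one_le_two h

lemma two_le_ratio {i k i' k' : ℕ} (h : e i k < e i' k') : 2 * a i k ≤ a i' k' := by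
  have h1 : (2 : ℝ) * 2 ^ e i k = 2 ^ (e i k + 1) := by ring
  rw [a, h1]
  exact le_a h

lemma shift_le (i k : ℕ) : 2 * ((i : ℝ) + 1) ≤ a i k := by
  have h1 : (2 : ℝ) ^ (i + 2) ≤ a i k := le_a (Nat.left_le_pair _ _)
  have h2 : (i : ℝ) + 1 ≤ 2 ^ i := by
    exact_mod_cast (Nat.lt_two_pow_self (n := i))
  have h3 : (2 : ℝ) ^ (i + 2) = 2 ^ i * 4 := by rw [pow_add]; ring
  nlinarith

lemma k_lt_a (i k : ℕ) : (k : ℝ) < a i k := by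
  have h1 : (2 : ℝ) ^ k ≤ a i k := le_a (Nat.right_le_pair _ _)
  have h2 : (k : ℝ) < 2 ^ k := by exact_mod_cast (Nat.lt_two_pow_self (n := k))
  linarith

/-- The set `A`. -/
def A : Set ℝ := {x | ∃ i k, x = a i k}

/-- The set `B`: each point of `A` shifted by `i + 1`. -/
def B : Set ℝ := {x | ∃ i k, x = a i k + ((i : ℝ) + 1)}

lemma mem_I {r : ℝ} (i k : ℕ) (h : (i : ℝ) + 1 ≤ r) :
    a i k ∈ nbhd r A ∩ nbhd r B := by
  have hi : (0 : ℝ) ≤ (i : ℝ) + 1 := by positivity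
  constructor
  · exact ⟨a i k, ⟨i, k, rfl⟩, by rw [dist_self]; linarith⟩
  · refine ⟨a i k + ((i : ℝ) + 1), ⟨i, k, rfl⟩, ?_⟩
    rw [Real.dist_eq]
    have : a i k - (a i k + ((i : ℝ) + 1)) = -(((i : ℝ) + 1)) := by ring
    rw [this, abs_neg, abs_of_nonneg hi]
    exact h

/-- Structure of the intersection of neighborhoods: every point is within `r` of some
`a i k` which either has small index `i` or is itself small. -/
lemma struct {r : ℝ} {x : ℝ} (hx : x ∈ nbhd r A ∩ nbhd r B) :
    ∃ i k, |x - a i k| ≤ r ∧ (((i : ℝ) + 1 ≤ 2 * r) ∨ a i k ≤ 8 * r) := by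
  obtain ⟨⟨y, ⟨i, k, rfl⟩, hy⟩, ⟨z, ⟨i', k', rfl⟩, hz⟩⟩ := hx
  rw [Real.dist_eq] at hy hz
  obtain ⟨hy1, hy2⟩ := abs_le.mp hy
  obtain ⟨hz1, hz2⟩ := abs_le.mp hz
  refine ⟨i, k, hy, ?_⟩
  by_cases hee : e i k = e i' k'
  · obtain ⟨h1, h2⟩ := e_inj hee
    subst h1; subst h2
    left; linarith
  · right
    have hs : (0 : ℝ) ≤ (i' : ℝ) + 1 := by positivity
    rcases lt_or_gt_of_ne hee with hlt | hgt
    · have h2 := two_le_ratio hlt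
      have := a_pos i k
      linarith
    · have h2 := two_le_ratio hgt
      have h3 := shift_le i' k'
      linarith

/-- Separation: points `a i₀ k₀` with `i₀` large are far from the radius-`r` intersection. -/
lemma sep {r : ℝ} (hr : 1 ≤ r) {i₀ k₀ : ℕ} (hi : 2 * r < (i₀ : ℝ) + 1) {y : ℝ}
    (hy : y ∈ nbhd r A ∩ nbhd r B) :
    a i₀ k₀ / 2 - 9 * r ≤ dist (a i₀ k₀) y := by
  obtain ⟨i, k, h1, h2⟩ := struct hy
  obtain ⟨h1a, h1b⟩ := abs_le.mp h1
  rw [Real.dist_eq]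
  have habs1 := le_abs_self (a i₀ k₀ - y)
  have habs2 := neg_abs_le (a i₀ k₀ - y)
  rcases h2 with h2 | h2
  · have hne : e i k ≠ e i₀ k₀ := by
      intro h
      obtain ⟨h', _⟩ := e_inj h
      subst h'
      linarith
    rcases lt_or_gt_of_ne hne with hlt | hgt
    · have h3 := two_le_ratio hlt
      have := a_pos i₀ k₀
      linarith
    · have h3 := two_le_ratio hgt
      have := a_pos i₀ k₀
      linarith
  · have := a_pos i₀ k₀
    linarith

end CoarseCounterexample

open CoarseCounterexample in
/-- There exist subsets `A, B ⊆ ℝ` whose coarse intersection does not exist: no subset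
`C ⊆ ℝ` is at finite Hausdorff distance from `N_r(A) ∩ N_r(B)` for all sufficiently
large `r`. -/
theorem coarse_intersection_may_not_exist :
    ∃ A B : Set ℝ,
      ¬ ∃ (C : Set ℝ) (r₀ : ℝ), 0 ≤ r₀ ∧
        ∀ r : ℝ, r₀ ≤ r →
          EMetric.hausdorffEdist C (nbhd r A ∩ nbhd r B) ≠ ⊤ := by
  refine ⟨A, B, ?_⟩
  rintro ⟨C, r₀, hr₀, H⟩
  set r : ℝ := max r₀ 1 with hrdef
  have hr1 : (1 : ℝ) ≤ r := le_max_right _ _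
  have hrr₀ : r₀ ≤ r := le_max_left _ _
  obtain ⟨i₀, hi₀⟩ := exists_nat_gt (2 * r)
  have hi : 2 * r < (i₀ : ℝ) + 1 := by linarith
  set r' : ℝ := (i₀ : ℝ) + 1 with hr'def
  have hr'r₀ : r₀ ≤ r' := by linarith
  set s : Set ℝ := nbhd r A ∩ nbhd r B with hsdef
  set t : Set ℝ := nbhd r' A ∩ nbhd r' B with htdef
  have hCs : EMetric.hausdorffEdist C s ≠ ⊤ := H r hrr₀
  have hCt : EMetric.hausdorffEdist C t ≠ ⊤ := H r' hr'r₀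
  have hst : EMetric.hausdorffEdist s t ≠ ⊤ := by
    refine ne_top_of_le_ne_top (ENNReal.add_ne_top.mpr ⟨?_, hCt⟩)
      (EMetric.hausdorffEdist_triangle (t := C))
    rwa [EMetric.hausdorffEdist_comm]
  set D := EMetric.hausdorffEdist s t with hDdef
  have hD1top : D + 1 ≠ ⊤ := ENNReal.add_ne_top.mpr ⟨hst, ENNReal.one_ne_top⟩
  set M : ℝ := (D + 1).toReal with hMdef
  obtain ⟨k₀, hk₀⟩ := exists_nat_gt (2 * (M + 9 * r))
  have hx : a i₀ k₀ ∈ t := mem_I i₀ k₀ (le_refl r')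
  have hD1 : EMetric.hausdorffEdist t s < D + 1 := by
    rw [show EMetric.hausdorffEdist t s = EMetric.hausdorffEdist s t from EMetric.hausdorffEdist_comm]
    exact ENNReal.lt_add_right hst one_ne_zero
  obtain ⟨y, hy, hxy⟩ := EMetric.exists_edist_lt_of_hausdorffEdist_lt hx hD1
  have hd : dist (a i₀ k₀) y ≤ M := by
    rw [dist_edist]
    exact ENNReal.toReal_mono hD1top hxy.le
  have hsep := sep (k₀ := k₀) hr1 hi hy
  have hak := k_lt_a i₀ k₀
  linarith
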